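/- Let k ≤ d and let (M(a))_{a∈{1,...,k}} be a POVM on ℂ^d in which each M(a) is a nonzero orthogonal projection (Hermitian with M(a)² = M(a)) and the projections are pairwise orthogonal (M(a)M(a') = 0 for a ≠ a') with Σ_a M(a) = I_d. Then there do NOT exist an integer m with 1 ≤ m < k, a stochastic matrix P : {1,...,k} × {1,...,m} → ℝ (P_{ab} ≥ 0, Σ_b P_{ab} = 1 for every a), and a POVM (M̃(b))_{b∈{1,...,m}} on ℂ^d, such that M(a) = Σ_{b=1}^m P_{ab} M̃(b) for all a. -/

import Mathlib

open scoped ComplexOrder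
open Matrix

/-- A POVM on `ℂ^d` with outcomes indexed by a finite type `B`. -/
def IsPOVMFam {d : ℕ} {B : Type*} [Fintype B] (M : B → Matrix (Fin d) (Fin d) ℂ) : Prop :=
  (∀ b, (M b).PosSemidef) ∧ ∑ b, M b = 1

lemma trace_nonneg_of_posSemidef {d : ℕ} {A : Matrix (Fin d) (Fin d) ℂ}
    (hA : A.PosSemidef) : 0 ≤ A.trace := by
  rw [Matrix.trace]
  apply Finset.sum_nonneg
  intro i _
  exact hA.diag_nonneg

lemma trace_mul_nonneg_of_posSemidef {d : ℕ} {A B : Matrix (Fin d) (Fin d) ℂ}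
    (hA : A.PosSemidef) (hB : B.PosSemidef) : 0 ≤ (A * B).trace := by
  open scoped MatrixOrder in
  obtain ⟨C, hC⟩ := CStarAlgebra.nonneg_iff_eq_star_mul_self.mp hA.nonneg
  have h2 : (A * B).trace = (C * B * Cᴴ).trace := by
    rw [hC, star_eq_conjTranspose, mul_assoc, Matrix.trace_mul_comm, mul_assoc]
  rw [h2]
  exact trace_nonneg_of_posSemidef (hB.mul_mul_conjTranspose_same _)

lemma trace_conjTranspose_mul_self_pos {d : ℕ} {A : Matrix (Fin d) (Fin d) ℂ}
    (hA : A ≠ 0) : 0 < (Aᴴ * A).trace := by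
  have htr : (Aᴴ * A).trace = ∑ i, ∑ j, (starRingEnd ℂ) (A j i) * A j i := by
    simp [Matrix.trace, Matrix.mul_apply, Matrix.diag]
  obtain ⟨i0, j0, hij⟩ : ∃ i j, A i j ≠ 0 := by
    by_contra h
    push_neg at h
    exact hA (by ext i j; simp [h i j])
  rw [htr]
  have hterm : ∀ i j : Fin d, 0 ≤ (starRingEnd ℂ) (A j i) * A j i := fun i j =>
    star_mul_self_nonneg (A j i)
  apply Finset.sum_pos' (fun i _ => Finset.sum_nonneg fun j _ => hterm i j)
  refine ⟨j0, Finset.mem_univ _, ?_⟩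
  apply Finset.sum_pos' (fun j _ => hterm j0 j)
  refine ⟨i0, Finset.mem_univ _, ?_⟩
  have : (starRingEnd ℂ) (A i0 j0) * A i0 j0 = ((Complex.normSq (A i0 j0) : ℝ) : ℂ) := by
    rw [mul_comm, Complex.mul_conj]
  rw [this]
  rw [Complex.zero_lt_real]
  exact Complex.normSq_pos.mpr hij

/-- let `k ≤ d` and let `(M a)_{a < k}` be a POVM on `ℂ^d` consisting of
nonzero pairwise-orthogonal (Hermitian) projections summing to the identity.  Then `M`
cannot be obtained by stochastic post-processing of a POVM with fewer than `k`
outcomes. -/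
theorem projective_povm_not_coarse_grainable {k d : ℕ} (hkd : k ≤ d)
    (M : Fin k → Matrix (Fin d) (Fin d) ℂ)
    (hHerm : ∀ a, (M a).IsHermitian)
    (hProj : ∀ a, M a * M a = M a)
    (hNe : ∀ a, M a ≠ 0)
    (hOrth : ∀ a a' : Fin k, a ≠ a' → M a * M a' = 0)
    (hSum : ∑ a, M a = 1) :
    ¬ ∃ (m : ℕ) (_ : 1 ≤ m) (_ : m < k) (P : Fin k → Fin m → ℝ)
        (Mt : Fin m → Matrix (Fin d) (Fin d) ℂ),
        (∀ a b, 0 ≤ P a b) ∧ (∀ a, ∑ b, P a b = 1) ∧ IsPOVMFam Mt ∧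
        ∀ a, M a = ∑ b, ((P a b : ℝ) : ℂ) • Mt b := by
  rintro ⟨m, hm1, hmk, P, Mt, hPnn, hPsum, ⟨hMtPSD, hMtSum⟩, hEq⟩
  -- the projections are PSD
  have hMPSD : ∀ a, (M a).PosSemidef := by
    intro a
    have h := Matrix.posSemidef_conjTranspose_mul_self (M a)
    rwa [(hHerm a).eq, hProj a] at h
  -- Step 1: trace formula
  have hkey : ∀ (a : Fin k) (b : Fin m),
      (Mt b * M a).trace = ∑ b', ((P a b' : ℝ) : ℂ) * (Mt b * Mt b').trace := by
    intro a b
    rw [hEq a, Finset.mul_sum]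
    simp [Matrix.mul_smul, Finset.sum_congr]
  -- Step 2: orthogonality kills cross terms
  have hstep2 : ∀ (a a' : Fin k) (b : Fin m), a ≠ a' → 0 < P a' b →
      (Mt b * M a).trace = 0 := by
    intro a a' b hne hPb
    have h0 : (M a' * M a).trace = 0 := by rw [hOrth a' a (Ne.symm hne), Matrix.trace_zero]
    have h1 : (M a' * M a).trace = ∑ b', ((P a' b' : ℝ) : ℂ) * (Mt b' * M a).trace := by
      conv_lhs => rw [hEq a']
      rw [Matrix.sum_mul]
      simp [Matrix.smul_mul]
    rw [h0] at h1
    have hzero : ∀ b' ∈ Finset.univ, ((P a' b' : ℝ) : ℂ) * (Mt b' * M a).trace = 0 := by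
      rw [eq_comm, Finset.sum_eq_zero_iff_of_nonneg] at h1
      · exact h1
      · intro b' _
        have : (0:ℂ) ≤ ((P a' b' : ℝ) : ℂ) := by
          rw [Complex.zero_le_real]; exact hPnn a' b'
        exact mul_nonneg this (trace_mul_nonneg_of_posSemidef (hMtPSD b') (hMPSD a))
    have := hzero b (Finset.mem_univ b)
    have hc : ((P a' b : ℝ) : ℂ) ≠ 0 := by
      simp only [ne_eq, Complex.ofReal_eq_zero]
      exact ne_of_gt hPb
    exact (mul_eq_zero.mp this).resolve_left hc
  -- Step 3: each a has a witness b with positive weight and nonzero Mt b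
  have hstep3 : ∀ a : Fin k, ∃ b : Fin m, 0 < P a b ∧ Mt b ≠ 0 := by
    intro a
    by_contra h
    push_neg at h
    apply hNe a
    rw [hEq a]
    apply Finset.sum_eq_zero
    intro b _
    rcases lt_or_eq_of_le (hPnn a b) with hp | hp
    · rw [h b hp, smul_zero]
    · rw [← hp]; simp
  choose f hf1 hf2 using hstep3
  -- f is injective
  have hinj : Function.Injective f := by
    intro a a' hfa
    by_contra hne
    have hMtb : Mt (f a) ≠ 0 := hf2 a
    have hPb : 0 < P a' (f a) := by rw [hfa]; exact hf1 a'
    set b := f a with hb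
    have h0 : (Mt b * M a).trace = 0 := hstep2 a a' b hne hPb
    rw [hkey a b] at h0
    have hpos : 0 < ∑ b', ((P a b' : ℝ) : ℂ) * (Mt b * Mt b').trace := by
      apply Finset.sum_pos'
      · intro b' _
        have h1 : (0:ℂ) ≤ ((P a b' : ℝ) : ℂ) := by
          rw [Complex.zero_le_real]; exact hPnn a b'
        exact mul_nonneg h1 (trace_mul_nonneg_of_posSemidef (hMtPSD b) (hMtPSD b'))
      · refine ⟨b, Finset.mem_univ b, ?_⟩
        apply mul_pos
        · rw [Complex.zero_lt_real]; exact hf1 a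
        · have : Mt b * Mt b = (Mt b)ᴴ * Mt b := by rw [(hMtPSD b).1.eq]
          rw [this]
          exact trace_conjTranspose_mul_self_pos hMtb
    rw [h0] at hpos
    exact lt_irrefl 0 hpos
  have := Fintype.card_le_of_injective f hinj
  simp only [Fintype.card_fin] at this
  omega
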